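/- (Variation of parameters, case k = 0.) Let f_1 : U → ℝ be a given continuous function, let b_0 ∈ ℝ, let B_0 : U → ℝ be differentiable, and define f_0(u) := (b_0 + B_0(u))·((n−2)/(n−1))·|F(u)|^{−n/(n−2)}·(F'(u))^{−1}. Then f_0 satisfies −a²·g + f_0'·g + a·f_1·g − f_0·g' + 2·f_0 = 0 on U if and only if B_0'(u) = (a² − a·f_1(u))·((n−1)/(n−2))·|F(u)|^{n/(n−2)}·F'(u) for all u ∈ U. -/

import Mathlib

/-- The function `g = ((n−2)F)/((n−1)F')`. -/
noncomputable def gFun (n : ℕ) (F : ℝ → ℝ) (u : ℝ) : ℝ :=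
  (((n : ℝ) - 2) * F u) / (((n : ℝ) - 1) * deriv F u)

set_option maxHeartbeats 1000000 in
theorem stmt18 (n : ℕ) (hn : 4 ≤ n) (a : ℝ)
    (U : Set ℝ) (hU : IsOpen U) (hUc : U.OrdConnected)
    (F : ℝ → ℝ)
    (hF₁ : ∀ u ∈ U, DifferentiableAt ℝ F u)
    (hF₂ : ∀ u ∈ U, DifferentiableAt ℝ (deriv F) u)
    (hFne : ∀ u ∈ U, F u ≠ 0)
    (hF'pos : ∀ u ∈ U, 0 < deriv F u)
    (f1 : ℝ → ℝ) (hf1 : ContinuousOn f1 U)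
    (b0 : ℝ) (B0 : ℝ → ℝ) (hB0 : ∀ u ∈ U, DifferentiableAt ℝ B0 u) :
    (∀ u ∈ U,
      -a ^ 2 * gFun n F u
        + deriv (fun x => (b0 + B0 x) * (((n : ℝ) - 2) / ((n : ℝ) - 1))
            * |F x| ^ (-(n : ℝ) / ((n : ℝ) - 2)) * (deriv F x)⁻¹) u * gFun n F u
        + a * f1 u * gFun n F u
        - ((b0 + B0 u) * (((n : ℝ) - 2) / ((n : ℝ) - 1))
            * |F u| ^ (-(n : ℝ) / ((n : ℝ) - 2)) * (deriv F u)⁻¹) * deriv (gFun n F) u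
        + 2 * ((b0 + B0 u) * (((n : ℝ) - 2) / ((n : ℝ) - 1))
            * |F u| ^ (-(n : ℝ) / ((n : ℝ) - 2)) * (deriv F u)⁻¹) = 0) ↔
    (∀ u ∈ U,
      deriv B0 u = (a ^ 2 - a * f1 u) * (((n : ℝ) - 1) / ((n : ℝ) - 2))
        * |F u| ^ ((n : ℝ) / ((n : ℝ) - 2)) * deriv F u) := by
  have hn4 : (4:ℝ) ≤ (n:ℝ) := by exact_mod_cast hn
  have hn2 : ((n:ℝ) - 2) ≠ 0 := by linarith
  have hn1 : ((n:ℝ) - 1) ≠ 0 := by linarith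
  refine forall₂_congr ?_
  intro u hu
  have hFu := hFne u hu
  have hF' := hF'pos u hu
  have hF'ne : deriv F u ≠ 0 := ne_of_gt hF'
  have hFd := (hF₁ u hu).hasDerivAt
  have hF'd := (hF₂ u hu).hasDerivAt
  have hBd := (hB0 u hu).hasDerivAt
  set p : ℝ := -(n:ℝ) / ((n:ℝ) - 2) with hp
  -- derivative of |F|
  obtain ⟨s, hs, habs, habsd⟩ : ∃ s : ℝ, (s = 1 ∨ s = -1) ∧ |F u| = s * F u ∧
      HasDerivAt (fun x => |F x|) (s * deriv F u) u := by
    rcases hFu.lt_or_gt with hneg | hpos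
    · refine ⟨-1, Or.inr rfl, by rw [abs_of_neg hneg]; ring, ?_⟩
      have hev : ∀ᶠ x in nhds u, F x < 0 :=
        (hF₁ u hu).continuousAt.preimage_mem_nhds (Iio_mem_nhds hneg)
      exact (hFd.const_mul (-1)).congr_of_eventuallyEq
        (hev.mono fun x hx => by simp only []; rw [abs_of_neg hx]; ring)
    · refine ⟨1, Or.inl rfl, by rw [abs_of_pos hpos]; ring, ?_⟩
      have hev : ∀ᶠ x in nhds u, 0 < F x :=
        (hF₁ u hu).continuousAt.preimage_mem_nhds (Ioi_mem_nhds hpos)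
      exact (hFd.const_mul 1).congr_of_eventuallyEq
        (hev.mono fun x hx => by simp only []; rw [abs_of_pos hx]; ring)
  have habsne : |F u| ≠ 0 := abs_ne_zero.mpr hFu
  have habspos : 0 < |F u| := abs_pos.mpr hFu
  have hpow : HasDerivAt (fun x => |F x| ^ p) (s * deriv F u * p * |F u| ^ (p - 1)) u :=
    habsd.rpow_const (Or.inl habsne)
  have hf0 := (((hBd.const_add b0).mul_const (((n:ℝ) - 2) / ((n:ℝ) - 1))).mul hpow).mul
    (hF'd.inv hF'ne)
  have hd0 : deriv (fun x => (b0 + B0 x) * (((n:ℝ) - 2) / ((n:ℝ) - 1)) * |F x| ^ p * (deriv F x)⁻¹) u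
      = (deriv B0 u * (((n:ℝ) - 2) / ((n:ℝ) - 1)) * |F u| ^ p
          + (b0 + B0 u) * (((n:ℝ) - 2) / ((n:ℝ) - 1)) * (s * deriv F u * p * |F u| ^ (p - 1))) * (deriv F u)⁻¹
        + (b0 + B0 u) * (((n:ℝ) - 2) / ((n:ℝ) - 1)) * |F u| ^ p * (-deriv (deriv F) u / deriv F u ^ 2) :=
    hf0.deriv
  have hgd : HasDerivAt (gFun n F)
      ((((n:ℝ) - 2) * deriv F u * (((n:ℝ) - 1) * deriv F u)
        - ((n:ℝ) - 2) * F u * (((n:ℝ) - 1) * deriv (deriv F) u))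
        / (((n:ℝ) - 1) * deriv F u) ^ 2) u :=
    (hFd.const_mul _).div (hF'd.const_mul _) (mul_ne_zero hn1 hF'ne)
  rw [hgd.deriv, hd0]
  have hA1 : |F u| ^ (p - 1) = |F u| ^ p / |F u| := by
    rw [Real.rpow_sub habspos, Real.rpow_one]
  have hA2 : |F u| ^ ((n:ℝ) / ((n:ℝ) - 2)) = (|F u| ^ p)⁻¹ := by
    rw [show ((n:ℝ) / ((n:ℝ) - 2)) = -p by rw [hp]; ring, Real.rpow_neg (abs_nonneg _)]
  have hApos : 0 < |F u| ^ p := Real.rpow_pos_of_pos habspos p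
  set A := |F u| ^ p with hA
  rw [hA1, hA2]
  simp only [gFun]
  rw [habs]
  rcases hs with rfl | rfl
  · have hE : -a ^ 2 * ((↑n - 2) * F u / ((↑n - 1) * deriv F u)) +
              ((deriv B0 u * ((↑n - 2) / (↑n - 1)) * A +
                      (b0 + B0 u) * ((↑n - 2) / (↑n - 1)) * (1 * deriv F u * p * (A / (1 * F u)))) *
                    (deriv F u)⁻¹ +
                  (b0 + B0 u) * ((↑n - 2) / (↑n - 1)) * A * (-deriv (deriv F) u / deriv F u ^ 2)) *
                ((↑n - 2) * F u / ((↑n - 1) * deriv F u)) +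
            a * f1 u * ((↑n - 2) * F u / ((↑n - 1) * deriv F u)) -
          (b0 + B0 u) * ((↑n - 2) / (↑n - 1)) * A * (deriv F u)⁻¹ *
            (((↑n - 2) * deriv F u * ((↑n - 1) * deriv F u) - (↑n - 2) * F u * ((↑n - 1) * deriv (deriv F) u)) /
              ((↑n - 1) * deriv F u) ^ 2) +
        2 * ((b0 + B0 u) * ((↑n - 2) / (↑n - 1)) * A * (deriv F u)⁻¹)
        = (((n:ℝ) - 2) / ((n:ℝ) - 1)) ^ 2 * F u * A / (deriv F u) ^ 2 *
          (deriv B0 u - (a ^ 2 - a * f1 u) * ((↑n - 1) / (↑n - 2)) * A⁻¹ * deriv F u) := by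
      rw [hp]
      field_simp
      ring
    have hKne : (((n:ℝ) - 2) / ((n:ℝ) - 1)) ^ 2 * F u * A / (deriv F u) ^ 2 ≠ 0 :=
      div_ne_zero (mul_ne_zero (mul_ne_zero (pow_ne_zero _ (div_ne_zero hn2 hn1)) hFu)
        hApos.ne') (pow_ne_zero _ hF'ne)
    rw [hE, mul_eq_zero, sub_eq_zero]
    exact or_iff_right hKne
  · have hE : -a ^ 2 * ((↑n - 2) * F u / ((↑n - 1) * deriv F u)) +
              ((deriv B0 u * ((↑n - 2) / (↑n - 1)) * A +
                      (b0 + B0 u) * ((↑n - 2) / (↑n - 1)) * (-1 * deriv F u * p * (A / (-1 * F u)))) *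
                    (deriv F u)⁻¹ +
                  (b0 + B0 u) * ((↑n - 2) / (↑n - 1)) * A * (-deriv (deriv F) u / deriv F u ^ 2)) *
                ((↑n - 2) * F u / ((↑n - 1) * deriv F u)) +
            a * f1 u * ((↑n - 2) * F u / ((↑n - 1) * deriv F u)) -
          (b0 + B0 u) * ((↑n - 2) / (↑n - 1)) * A * (deriv F u)⁻¹ *
            (((↑n - 2) * deriv F u * ((↑n - 1) * deriv F u) - (↑n - 2) * F u * ((↑n - 1) * deriv (deriv F) u)) /
              ((↑n - 1) * deriv F u) ^ 2) +
        2 * ((b0 + B0 u) * ((↑n - 2) / (↑n - 1)) * A * (deriv F u)⁻¹)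
        = (((n:ℝ) - 2) / ((n:ℝ) - 1)) ^ 2 * F u * A / (deriv F u) ^ 2 *
          (deriv B0 u - (a ^ 2 - a * f1 u) * ((↑n - 1) / (↑n - 2)) * A⁻¹ * deriv F u) := by
      rw [hp]
      field_simp
      ring
    have hKne : (((n:ℝ) - 2) / ((n:ℝ) - 1)) ^ 2 * F u * A / (deriv F u) ^ 2 ≠ 0 :=
      div_ne_zero (mul_ne_zero (mul_ne_zero (pow_ne_zero _ (div_ne_zero hn2 hn1)) hFu)
        hApos.ne') (pow_ne_zero _ hF'ne)
    rw [hE, mul_eq_zero, sub_eq_zero]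
    exact or_iff_right hKne
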